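/- arXiv:2402.04385 — 2 statements merged into one kernel-verified Lean document; each statement's English description precedes it below -/
import Mathlib

section
/- Let r₁ ≠ r₂ be nonzero roots of x² + c₁x + c₂ = 0 with p₁ = (r₁+r₂)/2 ≠ 0. Then |0 - p₁| / |r₁ - p₁| = |p₁ - r₁| / |c₂/p₁ - p₁| = |0 - r₁| / |r₁ - c₂/p₁| = |r₁ + r₂| / |r₁ - r₂|; hence the triangles with vertices (0, p₁, r₁) and (r₁, p₁, c₂/p₁) are similar. -/
open Complex

theorem stmt_11 (r₁ r₂ c₂ p₁ : ℂ) (hr₁ : r₁ ≠ 0) (hr₂ : r₂ ≠ 0) (hne : r₁ ≠ r₂)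
    (hc₂ : c₂ = r₁ * r₂) (hp₁ : p₁ = (r₁ + r₂) / 2) (hp₁0 : p₁ ≠ 0) :
    ‖0 - p₁‖ / ‖r₁ - p₁‖ = ‖r₁ + r₂‖ / ‖r₁ - r₂‖ ∧
    ‖p₁ - r₁‖ / ‖c₂ / p₁ - p₁‖ = ‖r₁ + r₂‖ / ‖r₁ - r₂‖ ∧
    ‖0 - r₁‖ / ‖r₁ - c₂ / p₁‖ = ‖r₁ + r₂‖ / ‖r₁ - r₂‖ := by
  have hs : r₁ + r₂ ≠ 0 := by
    intro h; apply hp₁0; rw [hp₁, h]; ring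
  have hd : r₁ - r₂ ≠ 0 := sub_ne_zero.mpr hne
  have he1 : (0 : ℂ) - p₁ = -((r₁ + r₂) / 2) := by rw [hp₁]; ring
  have he2 : r₁ - p₁ = (r₁ - r₂) / 2 := by rw [hp₁]; ring
  have he3 : p₁ - r₁ = -((r₁ - r₂) / 2) := by rw [hp₁]; ring
  have he4 : c₂ / p₁ - p₁ = -((r₁ - r₂) ^ 2 / (2 * (r₁ + r₂))) := by
    rw [hc₂, hp₁]; field_simp; ring
  have he5 : r₁ - c₂ / p₁ = r₁ * (r₁ - r₂) / (r₁ + r₂) := by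
    rw [hc₂, hp₁]; field_simp; ring
  rw [he1, he2, he3, he4, he5]
  simp only [norm_neg, norm_div, norm_mul, norm_pow, Complex.norm_ofNat, zero_sub, norm_neg]
  have ha : ‖r₁ + r₂‖ ≠ 0 := by simpa using hs
  have hb : ‖r₁ - r₂‖ ≠ 0 := by simpa [sub_eq_zero] using hd
  have hc : ‖r₁‖ ≠ 0 := by simpa using hr₁
  refine ⟨by field_simp, by field_simp, by field_simp⟩
end

section
/- With p₁ = (r₁+r₂)/2 ≠ 0 and c₂ = r₁r₂, the unoriented angle at p₁ between the points 0 and r₁ equals the unoriented angle at p₁ between r₁ and c₂/p₁, provided r₁, r₂ are nonzero and distinct and r₁ ≠ p₁. -/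
open Complex

lemma angle_mul_left (z u v : ℂ) (hz : z ≠ 0) :
    InnerProductGeometry.angle (z * u) (z * v) = InnerProductGeometry.angle u v := by
  unfold InnerProductGeometry.angle
  rw [Complex.inner, Complex.inner]
  have hz2 : (starRingEnd ℂ) z * z = ((‖z‖ : ℂ)^2) := by
    rw [mul_comm, Complex.mul_conj, Complex.normSq_eq_norm_sq]
    push_cast
    ring
  have h1 : z * v * (starRingEnd ℂ) (z * u) = ((‖z‖ : ℂ)^2) * (v * (starRingEnd ℂ) u) := by
    calc z * v * (starRingEnd ℂ) (z * u)
        = ((starRingEnd ℂ) z * z) * (v * (starRingEnd ℂ) u) := by rw [map_mul]; ring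
      _ = _ := by rw [hz2]
  rw [h1]
  have hz' : (0:ℝ) < ‖z‖ := norm_pos_iff.mpr hz
  simp only [norm_mul]
  rw [Complex.mul_re]
  congr 1
  have : ((‖z‖ : ℂ)^2).im = 0 := by norm_cast
  rw [this]
  have hre : ((‖z‖ : ℂ)^2).re = (‖z‖)^2 := by norm_cast
  rw [hre]
  have h2 : ‖z‖ ^ 2 * (‖z‖)⁻¹ ^ 2 = 1 := by
    field_simp
  field_simp
  ring

theorem stmt_13 (r₁ r₂ c₂ p₁ : ℂ) (hr₁ : r₁ ≠ 0) (hr₂ : r₂ ≠ 0) (hne : r₁ ≠ r₂)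
    (hc₂ : c₂ = r₁ * r₂) (hp₁ : p₁ = (r₁ + r₂) / 2) (hp₁0 : p₁ ≠ 0) :
    InnerProductGeometry.angle ((0 : ℂ) - p₁) (r₁ - p₁) =
      InnerProductGeometry.angle (r₁ - p₁) (c₂ / p₁ - p₁) := by
  set d : ℂ := (r₁ - r₂) / 2 with hd
  have hd0 : d ≠ 0 := by
    simp [hd, sub_eq_zero, hne]
  have h1 : (0 : ℂ) - p₁ = -p₁ := by ring
  have h2 : r₁ - p₁ = d := by rw [hp₁, hd]; ring
  have h3 : c₂ / p₁ - p₁ = -(d^2) / p₁ := by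
    field_simp
    rw [hc₂, hp₁, hd]
    ring
  rw [h1, h2, h3]
  have key : InnerProductGeometry.angle d (-(d^2) / p₁) =
      InnerProductGeometry.angle p₁ (-d) := by
    have := angle_mul_left (d / p₁) p₁ (-d) (div_ne_zero hd0 hp₁0)
    rw [← this]
    congr 1
    · field_simp
    · field_simp
  rw [key, ← InnerProductGeometry.angle_neg_neg p₁ (-d), neg_neg,
    InnerProductGeometry.angle_comm]
end
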